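/- Let X be a complete metric space and f₁, f₂: X → X contractions with constants κ₁, κ₂ < 1. Then there exists a nonempty compact set Δ ⊆ X with Δ = f₁(Δ) ∪ f₂(Δ), and Δ is the unique nonempty compact set with this property (the Hutchinson attractor). -/

import Mathlib

open EMetric Set ENNReal TopologicalSpace

private lemma infEdist_image_le_aux {X : Type*} [MetricSpace X] {f : X → X} {K : NNReal}
    (hf : LipschitzWith K f) (x : X) {t : Set X} (ht : t.Nonempty) :
    infEdist (f x) (f '' t) ≤ K * infEdist x t := by
  rcases eq_or_ne (K : ℝ≥0∞) 0 with hK | hK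
  · obtain ⟨y, hy⟩ := ht
    calc infEdist (f x) (f '' t) ≤ edist (f x) (f y) :=
          infEdist_le_edist_of_mem (mem_image_of_mem f hy)
      _ ≤ K * edist x y := hf x y
      _ = 0 := by rw [hK, zero_mul]
      _ ≤ _ := zero_le
  · calc infEdist (f x) (f '' t) ≤ ⨅ y ∈ t, (K : ℝ≥0∞) * edist x y :=
          le_iInf₂ fun y hy =>
            le_trans (infEdist_le_edist_of_mem (mem_image_of_mem f hy)) (hf x y)
      _ = K * infEdist x t := by
          rw [infEdist, Metric.infEDist, ENNReal.mul_iInf_of_ne hK (by simp)]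
          exact iInf_congr fun y => (ENNReal.mul_iInf_of_ne hK (by simp)).symm

private lemma hausdorff_union_le {X : Type*} [MetricSpace X] (s₁ s₂ t₁ t₂ : Set X) :
    hausdorffEdist (s₁ ∪ s₂) (t₁ ∪ t₂) ≤
      max (hausdorffEdist s₁ t₁) (hausdorffEdist s₂ t₂) := by
  refine hausdorffEdist_le_of_infEdist (fun x hx => ?_) (fun x hx => ?_)
  · rcases hx with hx | hx
    · exact le_trans (le_trans (infEdist_anti subset_union_left)
        (infEdist_le_hausdorffEdist_of_mem hx)) (le_max_left _ _)
    · exact le_trans (le_trans (infEdist_anti subset_union_right)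
        (infEdist_le_hausdorffEdist_of_mem hx)) (le_max_right _ _)
  · rcases hx with hx | hx
    · refine le_trans (le_trans (infEdist_anti subset_union_left)
        (infEdist_le_hausdorffEdist_of_mem hx)) ?_
      rw [hausdorffEdist_comm]; exact le_max_left _ _
    · refine le_trans (le_trans (infEdist_anti subset_union_right)
        (infEdist_le_hausdorffEdist_of_mem hx)) ?_
      rw [hausdorffEdist_comm]; exact le_max_right _ _

private lemma hausdorff_image_le {X : Type*} [MetricSpace X] {f : X → X} {K : NNReal}
    (hf : LipschitzWith K f) {s t : Set X} (hs : s.Nonempty) (ht : t.Nonempty) :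
    hausdorffEdist (f '' s) (f '' t) ≤ K * hausdorffEdist s t := by
  refine hausdorffEdist_le_of_infEdist (fun y hy => ?_) (fun y hy => ?_)
  · obtain ⟨x, hx, rfl⟩ := hy
    exact le_trans (infEdist_image_le_aux hf x ht)
      (mul_le_mul_right (infEdist_le_hausdorffEdist_of_mem hx) _)
  · obtain ⟨x, hx, rfl⟩ := hy
    refine le_trans (infEdist_image_le_aux hf x hs) ?_
    rw [hausdorffEdist, hausdorffEdist_comm]
    exact mul_le_mul_right (infEdist_le_hausdorffEdist_of_mem hx) _

/-- Hutchinson: two contractions of a nonempty complete metric space have a unique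
nonempty compact invariant set `Δ = f₁(Δ) ∪ f₂(Δ)`. -/
theorem exists_unique_hutchinson_attractor
    {X : Type*} [MetricSpace X] [CompleteSpace X] [Nonempty X]
    (f₁ f₂ : X → X) (κ₁ κ₂ : ℝ) (hκ₁0 : 0 ≤ κ₁) (hκ₂0 : 0 ≤ κ₂)
    (hκ₁ : κ₁ < 1) (hκ₂ : κ₂ < 1)
    (hf₁ : ∀ x y, dist (f₁ x) (f₁ y) ≤ κ₁ * dist x y)
    (hf₂ : ∀ x y, dist (f₂ x) (f₂ y) ≤ κ₂ * dist x y) :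
    ∃! Δ : Set X, Δ.Nonempty ∧ IsCompact Δ ∧ Δ = f₁ '' Δ ∪ f₂ '' Δ := by
  set K₁ : NNReal := ⟨κ₁, hκ₁0⟩
  set K₂ : NNReal := ⟨κ₂, hκ₂0⟩
  have hL₁ : LipschitzWith K₁ f₁ := LipschitzWith.of_dist_le_mul hf₁
  have hL₂ : LipschitzWith K₂ f₂ := LipschitzWith.of_dist_le_mul hf₂
  set K : NNReal := max K₁ K₂
  have hK1 : K < 1 := by
    rw [max_lt_iff]
    constructor <;> [exact_mod_cast hκ₁; exact_mod_cast hκ₂]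
  haveI : Nonempty (NonemptyCompacts X) :=
    ⟨⟨⟨{Classical.arbitrary X}, isCompact_singleton⟩, singleton_nonempty _⟩⟩
  set T : NonemptyCompacts X → NonemptyCompacts X := fun A =>
    ⟨⟨f₁ '' A ∪ f₂ '' A, (A.isCompact.image hL₁.continuous).union
      (A.isCompact.image hL₂.continuous)⟩, (A.nonempty.image f₁).mono subset_union_left⟩
  have hT : ContractingWith K T := by
    refine ⟨hK1, fun A B => ?_⟩
    have h1 : hausdorffEdist (f₁ '' (A : Set X)) (f₁ '' (B : Set X)) ≤
        K₁ * hausdorffEdist (A : Set X) B := hausdorff_image_le hL₁ A.nonempty B.nonempty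
    have h2 : hausdorffEdist (f₂ '' (A : Set X)) (f₂ '' (B : Set X)) ≤
        K₂ * hausdorffEdist (A : Set X) B := hausdorff_image_le hL₂ A.nonempty B.nonempty
    show hausdorffEdist ((T A : Set X)) (T B) ≤ K * hausdorffEdist (A : Set X) B
    calc hausdorffEdist ((T A : Set X)) (T B)
        ≤ max (hausdorffEdist (f₁ '' (A : Set X)) (f₁ '' (B : Set X)))
            (hausdorffEdist (f₂ '' (A : Set X)) (f₂ '' (B : Set X))) :=
          hausdorff_union_le _ _ _ _
      _ ≤ max (K₁ * hausdorffEdist (A : Set X) B) (K₂ * hausdorffEdist (A : Set X) B) :=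
          max_le_max h1 h2
      _ ≤ K * hausdorffEdist (A : Set X) B := by
          rw [max_le_iff]
          exact ⟨mul_le_mul_left (by exact_mod_cast le_max_left K₁ K₂) _,
            mul_le_mul_left (by exact_mod_cast le_max_right K₁ K₂) _⟩
  set Δ := ContractingWith.fixedPoint T hT with hΔdef
  have hfix : T Δ = Δ := hT.fixedPoint_isFixedPt
  refine ⟨(Δ : Set X), ⟨Δ.nonempty, Δ.isCompact, ?_⟩, ?_⟩
  · conv_lhs => rw [← hfix]
    rfl
  · rintro S ⟨hSne, hScomp, hSeq⟩
    set S' : NonemptyCompacts X := ⟨⟨S, hScomp⟩, hSne⟩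
    have h : S' = Δ := hT.fixedPoint_unique (NonemptyCompacts.ext hSeq.symm)
    exact congrArg (fun A : NonemptyCompacts X => (A : Set X)) h
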